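/- Let S(t) = ∑_{n≥0} tⁿ/(2n+1)! ∈ ℂ[[t]] (so that S(x²) is the formal series sinh(x)/x). There is a unique formal power series f^I ∈ ℂ[[λ,μ]] satisfying (1 + λμ·f^I(λ,μ)) · S(λ² + λμ + μ²) = S((λ+μ)²) in ℂ[[λ,μ]]; moreover f^I is symmetric (f^I(λ,μ) = f^I(μ,λ)), even (f^I(λ,μ) = f^I(−λ,−μ)), and satisfies equation (1.5b). -/

import Mathlib

noncomputable section

open Finset MvPowerSeries

/-- Total degree of a monomial in two variables. -/
def deg (d : Fin 2 →₀ ℕ) : ℕ := d 0 + d 1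

/-- Formal substitution `f(p, q)` of two polynomials `p`, `q` with zero constant term
for the variables of a two-variable formal power series `f`: the coefficient of a
monomial `d` in `f(p,q)` is `∑_{i,j} (coeff of λ^i μ^j in f) ⬝ (coeff of d in pⁱ·qʲ)`,
a finite sum since `coeff d (pⁱ·qʲ) = 0` whenever `i + j > deg d`. -/
def sub2 (p q : MvPolynomial (Fin 2) ℂ) (f : MvPowerSeries (Fin 2) ℂ) :
    MvPowerSeries (Fin 2) ℂ :=
  fun d => ∑ ij ∈ Finset.range (deg d + 1) ×ˢ Finset.range (deg d + 1),
    MvPowerSeries.coeff (Finsupp.single (0 : Fin 2) ij.1 + Finsupp.single 1 ij.2) f *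
      MvPolynomial.coeff d (p ^ ij.1 * q ^ ij.2)

/-- The formal exponential `exp g = ∑ₖ gᵏ/k!` of a two-variable formal power series `g`
with zero constant term. -/
def expMv (g : MvPowerSeries (Fin 2) ℂ) : MvPowerSeries (Fin 2) ℂ :=
  fun d => ∑ k ∈ Finset.range (deg d + 1), MvPowerSeries.coeff d (g ^ k) / (k.factorial : ℂ)

/-- `f(μ, −λ−μ)`. -/
def s₁ (f : MvPowerSeries (Fin 2) ℂ) : MvPowerSeries (Fin 2) ℂ :=
  sub2 (MvPolynomial.X 1) (-MvPolynomial.X 0 - MvPolynomial.X 1) f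

/-- `f(λ, −λ−μ)`. -/
def s₂ (f : MvPowerSeries (Fin 2) ℂ) : MvPowerSeries (Fin 2) ℂ :=
  sub2 (MvPolynomial.X 0) (-MvPolynomial.X 0 - MvPolynomial.X 1) f

/-- `f(μ, λ)`. -/
def swapS (f : MvPowerSeries (Fin 2) ℂ) : MvPowerSeries (Fin 2) ℂ :=
  sub2 (MvPolynomial.X 1) (MvPolynomial.X 0) f

/-- `f(−λ, −μ)`. -/
def negS (f : MvPowerSeries (Fin 2) ℂ) : MvPowerSeries (Fin 2) ℂ :=
  sub2 (-MvPolynomial.X 0) (-MvPolynomial.X 1) f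

/-- Equation (1.5b), the compressed hexagon equation:
`λμ(λ+μ)·( f(λ,μ) + e^{μ}·f(μ,−λ−μ) + e^{−λ}·f(λ,−λ−μ) ) = λ(e^{μ} − 1) + μ(e^{−λ} − 1)`. -/
def Eq15b (f : MvPowerSeries (Fin 2) ℂ) : Prop :=
  (X 0 : MvPowerSeries (Fin 2) ℂ) * X 1 * (X 0 + X 1) *
      (f + expMv (X 1) * s₁ f + expMv (-X 0) * s₂ f)
    = X 0 * (expMv (X 1) - 1) + X 1 * (expMv (-X 0) - 1)

/-- `S(p)` where `S(t) = ∑ₙ tⁿ/(2n+1)!` and `p` is a polynomial with zero constant term: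
the coefficient of a monomial `d` is the (finite) sum `∑ₙ (1/(2n+1)!) ⬝ coeff d (pⁿ)`. -/
def Sser (p : MvPolynomial (Fin 2) ℂ) : MvPowerSeries (Fin 2) ℂ :=
  fun d => ∑ n ∈ Finset.range (deg d + 1),
    (1 / ((2 * n + 1).factorial : ℂ)) * MvPolynomial.coeff d (p ^ n)

namespace FSAux

abbrev MS := MvPowerSeries (Fin 2) ℂ
abbrev MP := MvPolynomial (Fin 2) ℂ

def mm (i j : ℕ) : Fin 2 →₀ ℕ := Finsupp.single 0 i + Finsupp.single 1 j

lemma mm_apply0 (i j : ℕ) : mm i j 0 = i := by simp [mm]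

lemma mm_apply1 (i j : ℕ) : mm i j 1 = j := by simp [mm, Finsupp.single_apply]

lemma deg_mm (i j : ℕ) : deg (mm i j) = i + j := by simp [deg, mm_apply0, mm_apply1]

lemma mm_repr (d : Fin 2 →₀ ℕ) : d = mm (d 0) (d 1) := by
  ext a
  fin_cases a
  · simp [mm_apply0]
  · simp [mm_apply1]

lemma mm_inj {i j i' j' : ℕ} (h : mm i j = mm i' j') : i = i' ∧ j = j' := by
  constructor
  · have := congrArg (fun f : Fin 2 →₀ ℕ => f 0) h
    simpa [mm_apply0] using this
  · have := congrArg (fun f : Fin 2 →₀ ℕ => f 1) h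
    simpa [mm_apply1] using this

lemma deg_add (a b : Fin 2 →₀ ℕ) : deg (a + b) = deg a + deg b := by
  simp [deg]; ring

/-- Polynomial homogeneity: all nonzero coefficients sit in total degree `n`. -/
def PH (n : ℕ) (P : MP) : Prop := ∀ d, MvPolynomial.coeff d P ≠ 0 → deg d = n

lemma PH.zero (n : ℕ) : PH n (0 : MP) := fun d h => absurd (by simp) h

lemma PH.one : PH 0 (1 : MP) := by
  intro d h
  rw [MvPolynomial.coeff_one] at h
  by_cases hd : (0 : Fin 2 →₀ ℕ) = d
  · rw [← hd]; simp [deg]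
  · simp [hd] at h

lemma PH.X (i : Fin 2) : PH 1 (MvPolynomial.X i : MP) := by
  intro d h
  rw [MvPolynomial.coeff_X'] at h
  by_cases hd : Finsupp.single i 1 = d
  · subst hd; fin_cases i <;> simp [deg, Finsupp.single_apply]
  · simp [hd] at h

lemma PH.neg {n : ℕ} {P : MP} (h : PH n P) : PH n (-P) := fun d hc =>
  h d (by simpa using hc)

lemma PH.add {n : ℕ} {P Q : MP} (hP : PH n P) (hQ : PH n Q) : PH n (P + Q) := by
  intro d hc
  by_cases h1 : MvPolynomial.coeff d P = 0
  · exact hQ d (by rwa [MvPolynomial.coeff_add, h1, zero_add] at hc)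
  · exact hP d h1

lemma PH.sub {n : ℕ} {P Q : MP} (hP : PH n P) (hQ : PH n Q) : PH n (P - Q) := by
  rw [sub_eq_add_neg]; exact hP.add hQ.neg

lemma PH.mul {m n : ℕ} {P Q : MP} (hP : PH m P) (hQ : PH n Q) : PH (m + n) (P * Q) := by
  intro d hc
  rw [MvPolynomial.coeff_mul] at hc
  obtain ⟨x, hx, hne⟩ := Finset.exists_ne_zero_of_sum_ne_zero hc
  rw [Finset.HasAntidiagonal.mem_antidiagonal] at hx
  rw [← hx, deg_add, hP x.1 (left_ne_zero_of_mul hne), hQ x.2 (right_ne_zero_of_mul hne)]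

lemma PH.pow {n : ℕ} {P : MP} (h : PH n P) (k : ℕ) : PH (n * k) (P ^ k) := by
  induction k with
  | zero => simpa using PH.one
  | succ k ih =>
    rw [pow_succ, Nat.mul_succ]
    exact ih.mul h

/-- Series homogeneity. -/
def SH (n : ℕ) (g : MS) : Prop := ∀ d, MvPowerSeries.coeff d g ≠ 0 → deg d = n

lemma SH.coe {n : ℕ} {P : MP} (h : PH n P) : SH n (P : MS) := fun d hc =>
  h d (by simpa using hc)

lemma SH.one : SH 0 (1 : MS) := by
  rw [← MvPolynomial.coe_one]; exact SH.coe PH.one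

lemma SH.X (i : Fin 2) : SH 1 (MvPowerSeries.X i : MS) := by
  rw [← MvPolynomial.coe_X]; exact SH.coe (PH.X i)

lemma SH.neg {n : ℕ} {g : MS} (h : SH n g) : SH n (-g) := fun d hc =>
  h d (by simpa using hc)

lemma SH.add {n : ℕ} {g h : MS} (hg : SH n g) (hh : SH n h) : SH n (g + h) := by
  intro d hc
  by_cases h1 : MvPowerSeries.coeff d g = 0
  · exact hh d (by rwa [map_add, h1, zero_add] at hc)
  · exact hg d h1

lemma SH.mul {m n : ℕ} {g h : MS} (hg : SH m g) (hh : SH n h) : SH (m + n) (g * h) := by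
  intro d hc
  rw [MvPowerSeries.coeff_mul] at hc
  obtain ⟨x, hx, hne⟩ := Finset.exists_ne_zero_of_sum_ne_zero hc
  rw [Finset.HasAntidiagonal.mem_antidiagonal] at hx
  rw [← hx, deg_add, hg x.1 (left_ne_zero_of_mul hne), hh x.2 (right_ne_zero_of_mul hne)]

lemma SH.pow {n : ℕ} {g : MS} (h : SH n g) (k : ℕ) : SH (n * k) (g ^ k) := by
  induction k with
  | zero => simpa using SH.one
  | succ k ih =>
    rw [pow_succ, Nat.mul_succ]
    exact ih.mul h

lemma SH.vanish {n : ℕ} {g : MS} (h : SH n g) {d : Fin 2 →₀ ℕ} (hd : deg d ≠ n) :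
    MvPowerSeries.coeff d g = 0 := by
  by_contra hc; exact hd (h d hc)

lemma PH.vanish {n : ℕ} {P : MP} (h : PH n P) {d : Fin 2 →₀ ℕ} (hd : deg d ≠ n) :
    MvPolynomial.coeff d P = 0 := by
  by_contra hc; exact hd (h d hc)

/-- coefficient of `p^i*q^j` vanishes off degree `i+j` for homogeneous linear `p q`. -/
lemma coeff_pp_vanish {p q : MP} (hp : PH 1 p) (hq : PH 1 q) {i j : ℕ} {d : Fin 2 →₀ ℕ}
    (hd : deg d ≠ i + j) : MvPolynomial.coeff d (p ^ i * q ^ j) = 0 := by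
  have h := (hp.pow i).mul (hq.pow j)
  simp only [one_mul] at h
  exact h.vanish hd

end FSAux

namespace FSAux

/-- The substitution algebra map on polynomials. -/
def Tm (p q : MP) : MP →ₐ[ℂ] MP := MvPolynomial.aeval ![p, q]

lemma Tm_X0 (p q : MP) : Tm p q (MvPolynomial.X 0) = p := by
  simp [Tm]

lemma Tm_X1 (p q : MP) : Tm p q (MvPolynomial.X 1) = q := by
  simp [Tm]

lemma mon_mm (i j : ℕ) (c : ℂ) :
    (MvPolynomial.monomial (mm i j) c : MP)
      = MvPolynomial.C c * (MvPolynomial.X 0 ^ i * MvPolynomial.X 1 ^ j) := by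
  rw [MvPolynomial.X_pow_eq_monomial, MvPolynomial.X_pow_eq_monomial,
    MvPolynomial.monomial_mul, MvPolynomial.C_mul_monomial]
  simp [mm]

lemma T_monomial (p q : MP) (i j : ℕ) (c : ℂ) :
    Tm p q (MvPolynomial.monomial (mm i j) c) = MvPolynomial.C c * (p ^ i * q ^ j) := by
  rw [mon_mm, map_mul, map_mul, map_pow, map_pow, Tm_X0, Tm_X1]
  congr 1
  simp [Tm, MvPolynomial.algebraMap_eq]

lemma coeff_T_support (p q : MP) (P : MP) (d : Fin 2 →₀ ℕ) :
    MvPolynomial.coeff d (Tm p q P)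
      = ∑ v ∈ P.support, MvPolynomial.coeff v P * MvPolynomial.coeff d (p ^ (v 0) * q ^ (v 1)) := by
  conv_lhs => rw [P.as_sum, map_sum, MvPolynomial.coeff_sum]
  apply Finset.sum_congr rfl
  intro v _
  rw [show (MvPolynomial.monomial v (MvPolynomial.coeff v P) : MP)
      = MvPolynomial.monomial (mm (v 0) (v 1)) (MvPolynomial.coeff v P) by rw [← mm_repr],
    T_monomial, MvPolynomial.coeff_C_mul]

lemma coeff_T_vanish {p q : MP} (hp : PH 1 p) (hq : PH 1 q) (P : MP) (d : Fin 2 →₀ ℕ)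
    (h : ∀ v, deg v = deg d → MvPolynomial.coeff v P = 0) :
    MvPolynomial.coeff d (Tm p q P) = 0 := by
  rw [coeff_T_support]
  apply Finset.sum_eq_zero
  intro v _
  by_cases hdeg : deg v = deg d
  · rw [h v hdeg, zero_mul]
  · have hd2 : deg d ≠ v 0 + v 1 := by
      simp only [deg] at hdeg ⊢; omega
    rw [coeff_pp_vanish hp hq hd2, mul_zero]

/-- Truncation of a power series to a polynomial capturing all exponents `≤ N` in each variable. -/
def truncD (N : ℕ) (f : MS) : MP :=
  ∑ ij ∈ Finset.range (N+1) ×ˢ Finset.range (N+1),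
    MvPolynomial.monomial (mm ij.1 ij.2) (MvPowerSeries.coeff (mm ij.1 ij.2) f)

lemma coeff_truncD (N : ℕ) (f : MS) (v : Fin 2 →₀ ℕ) :
    MvPolynomial.coeff v (truncD N f)
      = if v 0 ≤ N ∧ v 1 ≤ N then MvPowerSeries.coeff v f else 0 := by
  rw [truncD, MvPolynomial.coeff_sum]
  simp_rw [MvPolynomial.coeff_monomial]
  by_cases h : v 0 ≤ N ∧ v 1 ≤ N
  · rw [if_pos h]
    rw [Finset.sum_eq_single_of_mem (v 0, v 1)
      (by simp [Finset.mem_product, Nat.lt_succ_iff, h.1, h.2])]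
    · rw [if_pos (by rw [← mm_repr]), ← mm_repr v]
    · intro b _ hne
      rw [if_neg]
      intro he
      obtain ⟨h1, h2⟩ := mm_inj (he.trans (mm_repr v))
      exact hne (Prod.ext h1 h2)
  · rw [if_neg h]
    apply Finset.sum_eq_zero
    intro b hb
    rw [if_neg]
    intro he
    obtain ⟨h1, h2⟩ := mm_inj (he.trans (mm_repr v))
    simp only [Finset.mem_product, Finset.mem_range, Nat.lt_succ_iff] at hb
    exact h ⟨by rw [← h1]; exact hb.1, by rw [← h2]; exact hb.2⟩

lemma sub2_eq_sum (p q : MP) (hp : PH 1 p) (hq : PH 1 q) (f : MS) (d : Fin 2 →₀ ℕ)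
    {N : ℕ} (hN : deg d ≤ N) :
    MvPowerSeries.coeff d (sub2 p q f) =
      ∑ ij ∈ Finset.range (N+1) ×ˢ Finset.range (N+1),
        MvPowerSeries.coeff (mm ij.1 ij.2) f * MvPolynomial.coeff d (p ^ ij.1 * q ^ ij.2) := by
  rw [MvPowerSeries.coeff_apply]
  show ∑ ij ∈ Finset.range (deg d + 1) ×ˢ Finset.range (deg d + 1),
      MvPowerSeries.coeff (mm ij.1 ij.2) f * MvPolynomial.coeff d (p ^ ij.1 * q ^ ij.2) = _
  apply Finset.sum_subset
  · exact Finset.product_subset_product (Finset.range_subset_range.2 (by omega))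
      (Finset.range_subset_range.2 (by omega))
  · intro x hx hnx
    simp only [Finset.mem_product, Finset.mem_range, Nat.lt_succ_iff] at hx hnx
    have : deg d ≠ x.1 + x.2 := by omega
    rw [coeff_pp_vanish hp hq this, mul_zero]

/-- `sub2` is compatible with `Tm` through truncation. -/
lemma sub2_coeff_T {p q : MP} (hp : PH 1 p) (hq : PH 1 q) (f : MS) (d : Fin 2 →₀ ℕ)
    {N : ℕ} (hN : deg d ≤ N) :
    MvPowerSeries.coeff d (sub2 p q f) = MvPolynomial.coeff d (Tm p q (truncD N f)) := by
  rw [sub2_eq_sum p q hp hq f d hN, truncD, map_sum, MvPolynomial.coeff_sum]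
  apply Finset.sum_congr rfl
  intro ij _
  rw [T_monomial, MvPolynomial.coeff_C_mul]

end FSAux
namespace FSAux

lemma sub2_add (p q : MP) (f g : MS) : sub2 p q (f + g) = sub2 p q f + sub2 p q g := by
  funext d
  show ∑ ij ∈ _, _ = sub2 p q f d + sub2 p q g d
  rw [sub2, sub2, ← Finset.sum_add_distrib]
  apply Finset.sum_congr rfl
  intro ij _
  rw [map_add, add_mul]

/-- `sub2` as an additive monoid hom in `f`. -/
def sub2AM (p q : MP) : MS →+ MS where
  toFun := sub2 p q
  map_zero' := by
    funext d
    show ∑ ij ∈ _, _ = (0 : ℂ)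
    apply Finset.sum_eq_zero
    intro ij _
    rw [map_zero, zero_mul]
  map_add' := sub2_add p q

lemma sub2_monomial {p q : MP} (hp : PH 1 p) (hq : PH 1 q) (v : Fin 2 →₀ ℕ) (c : ℂ) :
    sub2 p q ((MvPolynomial.monomial v c : MP) : MS)
      = ((MvPolynomial.C c * (p ^ (v 0) * q ^ (v 1)) : MP) : MS) := by
  apply MvPowerSeries.ext
  intro d
  rw [sub2_eq_sum p q hp hq _ d (le_max_left (deg d) (v 0 + v 1))]
  rw [MvPolynomial.coeff_coe, MvPolynomial.coeff_C_mul]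
  set N := max (deg d) (v 0 + v 1) with hN
  rw [Finset.sum_eq_single_of_mem (v 0, v 1)
    (by simp only [Finset.mem_product, Finset.mem_range, Nat.lt_succ_iff]; omega)]
  · rw [MvPolynomial.coeff_coe, ← mm_repr v, MvPolynomial.coeff_monomial, if_pos rfl]
  · intro b _ hne
    rw [MvPolynomial.coeff_coe, MvPolynomial.coeff_monomial, if_neg, zero_mul]
    intro he
    obtain ⟨h1, h2⟩ := mm_inj ((mm_repr v).symm.trans he :
      mm (v 0) (v 1) = mm b.1 b.2)
    exact hne (Prod.ext h1.symm h2.symm)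

lemma coe_sum_MS (s : Finset (Fin 2 →₀ ℕ)) (F : (Fin 2 →₀ ℕ) → MP) :
    (((∑ v ∈ s, F v : MP)) : MS) = ∑ v ∈ s, ((F v : MP) : MS) := by
  rw [← MvPolynomial.coeToMvPowerSeries.ringHom_apply, map_sum]
  simp

lemma sub2_coe {p q : MP} (hp : PH 1 p) (hq : PH 1 q) (P : MP) :
    sub2 p q (P : MS) = ((Tm p q P : MP) : MS) := by
  conv_lhs => rw [P.as_sum]
  conv_rhs => rw [P.as_sum, map_sum]
  rw [coe_sum_MS, coe_sum_MS, show sub2 p q = ⇑(sub2AM p q) from rfl, map_sum]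
  apply Finset.sum_congr rfl
  intro v _
  show sub2 p q _ = _
  rw [sub2_monomial hp hq, show (MvPolynomial.monomial v (MvPolynomial.coeff v P) : MP)
      = MvPolynomial.monomial (mm (v 0) (v 1)) (MvPolynomial.coeff v P) from by rw [← mm_repr],
    T_monomial]

lemma sub2_one {p q : MP} (hp : PH 1 p) (hq : PH 1 q) : sub2 p q (1 : MS) = 1 := by
  rw [← MvPolynomial.coe_one, sub2_coe hp hq, map_one, MvPolynomial.coe_one]

lemma sub2_mul {p q : MP} (hp : PH 1 p) (hq : PH 1 q) (f g : MS) :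
    sub2 p q (f * g) = sub2 p q f * sub2 p q g := by
  apply MvPowerSeries.ext
  intro d
  set n := deg d with hn
  rw [sub2_coeff_T hp hq _ d le_rfl, MvPowerSeries.coeff_mul]
  have hR : ∀ x ∈ Finset.HasAntidiagonal.antidiagonal d,
      MvPowerSeries.coeff x.1 (sub2 p q f) * MvPowerSeries.coeff x.2 (sub2 p q g)
        = MvPolynomial.coeff x.1 (Tm p q (truncD n f)) * MvPolynomial.coeff x.2 (Tm p q (truncD n g)) := by
    intro x hx
    rw [Finset.HasAntidiagonal.mem_antidiagonal] at hx
    have hdd := deg_add x.1 x.2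
    rw [hx] at hdd
    have h1 : deg x.1 ≤ n := by omega
    have h2 : deg x.2 ≤ n := by omega
    rw [sub2_coeff_T hp hq f x.1 h1, sub2_coeff_T hp hq g x.2 h2]
  rw [Finset.sum_congr rfl hR, ← MvPolynomial.coeff_mul, ← map_mul]
  rw [show Tm p q (truncD n (f * g)) = Tm p q (truncD n f * truncD n g)
      + Tm p q (truncD n (f * g) - truncD n f * truncD n g) by rw [← map_add]; ring_nf]
  rw [MvPolynomial.coeff_add]
  have hvan : MvPolynomial.coeff d (Tm p q (truncD n (f * g) - truncD n f * truncD n g)) = 0 := by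
    apply coeff_T_vanish hp hq
    intro v hv
    rw [MvPolynomial.coeff_sub, coeff_truncD, MvPolynomial.coeff_mul]
    have hv0 : v 0 ≤ n ∧ v 1 ≤ n := by
      have h1 : v 0 + v 1 = d 0 + d 1 := hv
      have h2 : n = d 0 + d 1 := hn
      omega
    rw [if_pos hv0, MvPowerSeries.coeff_mul, sub_eq_zero]
    apply Finset.sum_congr rfl
    intro y hy
    rw [Finset.HasAntidiagonal.mem_antidiagonal] at hy
    have h0 := congrArg (fun t : Fin 2 →₀ ℕ => t 0) hy
    have h1 := congrArg (fun t : Fin 2 →₀ ℕ => t 1) hy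
    simp only [Finsupp.add_apply] at h0 h1
    have hy0 : y.1 0 ≤ n ∧ y.1 1 ≤ n := by omega
    have hy1 : y.2 0 ≤ n ∧ y.2 1 ≤ n := by omega
    rw [coeff_truncD, coeff_truncD, if_pos hy0, if_pos hy1]
  rw [hvan, add_zero]

/-- `sub2` with linear homogeneous substitutions, as a ring homomorphism. -/
def subRH (p q : MP) (hp : PH 1 p) (hq : PH 1 q) : MS →+* MS where
  toFun := sub2 p q
  map_one' := sub2_one hp hq
  map_mul' := sub2_mul hp hq
  map_zero' := (sub2AM p q).map_zero
  map_add' := sub2_add p q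

lemma sub2_Sser {p q : MP} (hp : PH 1 p) (hq : PH 1 q) (r : MP) :
    sub2 p q (Sser r) = Sser (Tm p q r) := by
  apply MvPowerSeries.ext
  intro d
  set n := deg d with hn
  rw [sub2_eq_sum p q hp hq _ d le_rfl]
  have step : ∀ ij ∈ Finset.range (n+1) ×ˢ Finset.range (n+1),
      MvPowerSeries.coeff (mm ij.1 ij.2) (Sser r) * MvPolynomial.coeff d (p ^ ij.1 * q ^ ij.2)
        = ∑ k ∈ Finset.range (n+1), (1 / ((2 * k + 1).factorial : ℂ))
            * MvPolynomial.coeff (mm ij.1 ij.2) (r ^ k) * MvPolynomial.coeff d (p ^ ij.1 * q ^ ij.2) := by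
    intro ij _
    by_cases hc : MvPolynomial.coeff d (p ^ ij.1 * q ^ ij.2) = 0
    · rw [hc, mul_zero, Finset.sum_eq_zero]
      intro k _
      rw [mul_zero]
    · have hij : ij.1 + ij.2 = n := by
        by_contra hne
        have hdd : deg d ≠ ij.1 + ij.2 := by rw [← hn]; omega
        exact hc (coeff_pp_vanish hp hq hdd)
      rw [MvPowerSeries.coeff_apply, Sser, deg_mm, hij, Finset.sum_mul]
  rw [Finset.sum_congr rfl step, Finset.sum_comm]
  show _ = ∑ k ∈ Finset.range (deg d + 1), (1 / ((2 * k + 1).factorial : ℂ))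
      * MvPolynomial.coeff d ((Tm p q r) ^ k)
  apply Finset.sum_congr rfl
  intro k _
  rw [← map_pow]
  have : MvPolynomial.coeff d (Tm p q (r ^ k))
      = MvPowerSeries.coeff d (sub2 p q ((r ^ k : MP) : MS)) := by
    rw [sub2_coe hp hq, MvPolynomial.coeff_coe]
  rw [this, sub2_eq_sum p q hp hq _ d le_rfl, Finset.mul_sum]
  apply Finset.sum_congr rfl
  intro ij _
  rw [MvPolynomial.coeff_coe]
  ring

end FSAux
namespace FSAux

lemma coeff_exp (g : MS) (d : Fin 2 →₀ ℕ) : MvPowerSeries.coeff d (expMv g)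
    = ∑ k ∈ Finset.range (deg d + 1), MvPowerSeries.coeff d (g ^ k) / (k.factorial : ℂ) := rfl

lemma SH.pow1 {g : MS} (hg : SH 1 g) (k : ℕ) : SH k (g ^ k) := by
  have := hg.pow k; rwa [one_mul] at this

lemma coeff_exp_ext {g : MS} (hg : SH 1 g) (d : Fin 2 →₀ ℕ) {N : ℕ} (hN : deg d ≤ N) :
    MvPowerSeries.coeff d (expMv g)
      = ∑ k ∈ Finset.range (N + 1), MvPowerSeries.coeff d (g ^ k) / (k.factorial : ℂ) := by
  rw [coeff_exp]
  apply Finset.sum_subset (Finset.range_subset_range.2 (by omega))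
  intro k hk hnk
  simp only [Finset.mem_range, Nat.lt_succ_iff] at hk hnk
  rw [(hg.pow1 k).vanish (by omega), zero_div]

lemma expAdd {g h : MS} (hg : SH 1 g) (hh : SH 1 h) :
    expMv g * expMv h = expMv (g + h) := by
  apply MvPowerSeries.ext
  intro d
  set n := deg d with hn
  have hL : MvPowerSeries.coeff d (expMv g * expMv h)
      = ∑ k ∈ Finset.range (n+1), MvPowerSeries.coeff d (g ^ k * h ^ (n - k))
          / ((k.factorial : ℂ) * ((n-k).factorial : ℂ)) := by
    rw [MvPowerSeries.coeff_mul]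
    have key : ∀ x ∈ Finset.HasAntidiagonal.antidiagonal d,
        MvPowerSeries.coeff x.1 (expMv g) * MvPowerSeries.coeff x.2 (expMv h)
          = ∑ k ∈ Finset.range (n+1), MvPowerSeries.coeff x.1 (g ^ k)
              * MvPowerSeries.coeff x.2 (h ^ (n - k))
              / ((k.factorial : ℂ) * ((n-k).factorial : ℂ)) := by
      intro x hx
      rw [Finset.HasAntidiagonal.mem_antidiagonal] at hx
      have hdd := deg_add x.1 x.2
      rw [hx] at hdd
      rw [coeff_exp_ext hg x.1 (N := n) (by omega), coeff_exp_ext hh x.2 (N := n) (by omega),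
        Finset.sum_mul_sum]
      apply Finset.sum_congr rfl
      intro k _
      rw [Finset.sum_eq_single_of_mem (n - k)
        (by simp only [Finset.mem_range, Nat.lt_succ_iff]; omega)]
      · rw [div_mul_div_comm]
      · intro l _ hlne
        by_cases hzk : MvPowerSeries.coeff x.1 (g ^ k) = 0
        · rw [hzk, zero_div, zero_mul]
        · have hk1 : deg x.1 = k := hg.pow1 k x.1 hzk
          have hl2 : deg x.2 ≠ l := by omega
          rw [(hh.pow1 l).vanish hl2, zero_div, mul_zero]
    rw [Finset.sum_congr rfl key, Finset.sum_comm]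
    apply Finset.sum_congr rfl
    intro k _
    rw [← Finset.sum_div, MvPowerSeries.coeff_mul]
  rw [hL, coeff_exp, ← hn]
  conv_rhs => rw [Finset.sum_eq_single_of_mem n (Finset.self_mem_range_succ n)
    (fun m _ hm => by rw [((hg.add hh).pow1 m).vanish (by omega), zero_div])]
  rw [add_pow, map_sum, Finset.sum_div]
  apply Finset.sum_congr rfl
  intro k hk
  rw [Finset.mem_range, Nat.lt_succ_iff] at hk
  have hfac : ((n.choose k : ℕ) : ℂ) * (k.factorial : ℂ) * (((n-k).factorial : ℂ)) = (n.factorial : ℂ) := by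
    exact_mod_cast congrArg (Nat.cast : ℕ → ℂ) (Nat.choose_mul_factorial_mul_factorial hk)
  rw [show ((n.choose k : ℕ) : MS) = MvPowerSeries.C ((n.choose k : ℕ) : ℂ) from by
    rw [map_natCast], MvPowerSeries.coeff_mul_C]
  have hk0 : (k.factorial : ℂ) ≠ 0 := Nat.cast_ne_zero.2 k.factorial_ne_zero
  have hk1 : (((n-k).factorial : ℂ)) ≠ 0 := Nat.cast_ne_zero.2 (n-k).factorial_ne_zero
  have hn0 : ((n.factorial : ℂ)) ≠ 0 := Nat.cast_ne_zero.2 n.factorial_ne_zero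
  rw [div_eq_div_iff (by exact mul_ne_zero hk0 hk1) hn0]
  linear_combination (-(MvPowerSeries.coeff d (g ^ k * h ^ (n - k)))) * hfac

end FSAux
namespace FSAux

lemma coeff_Sser (r : MP) (d : Fin 2 →₀ ℕ) : MvPowerSeries.coeff d (Sser r)
    = ∑ k ∈ Finset.range (deg d + 1),
        (1 / ((2 * k + 1).factorial : ℂ)) * MvPolynomial.coeff d (r ^ k) := rfl

lemma sinhLem (P : MP) (hP : PH 1 P) :
    2 * (P : MS) * Sser (P ^ 2) = expMv (P : MS) - expMv (-(P : MS)) := by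
  apply MvPowerSeries.ext
  intro d
  set n := deg d with hn
  have hS : SH 1 (P : MS) := SH.coe hP
  have hSneg : SH 1 (-(P : MS)) := hS.neg
  -- RHS
  rw [map_sub, coeff_exp, coeff_exp, ← hn, ← Finset.sum_sub_distrib]
  have hRHS : ∀ k ∈ Finset.range (n+1),
      MvPowerSeries.coeff d ((P : MS) ^ k) / (k.factorial : ℂ)
        - MvPowerSeries.coeff d ((-(P : MS)) ^ k) / (k.factorial : ℂ)
      = (1 - (-1 : ℂ)^k) * MvPowerSeries.coeff d ((P : MS) ^ k) / (k.factorial : ℂ) := by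
    intro k _
    rw [neg_pow, show ((-1 : MS)) = MvPowerSeries.C (-1) from by
      rw [map_neg, map_one], ← map_pow, MvPowerSeries.coeff_C_mul]
    ring
  rw [Finset.sum_congr rfl hRHS,
    Finset.sum_eq_single_of_mem n (Finset.self_mem_range_succ n)
      (fun m _ hm => by rw [(hS.pow1 m).vanish (by omega), mul_zero, zero_div])]
  -- LHS
  rw [show (2 : MS) * (P : MS) * Sser (P ^ 2)
      = MvPowerSeries.C 2 * ((P : MS) * Sser (P ^ 2)) from by
        rw [show (2 : MS) = MvPowerSeries.C 2 from (map_ofNat (MvPowerSeries.C) 2).symm,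
          mul_assoc], MvPowerSeries.coeff_C_mul, MvPowerSeries.coeff_mul]
  rcases Nat.even_or_odd n with he | ho
  · -- even case : both sides vanish
    obtain ⟨mo, hmo⟩ := id he
    have hz : ∀ x ∈ Finset.HasAntidiagonal.antidiagonal d,
        MvPowerSeries.coeff x.1 ((P : MS)) * MvPowerSeries.coeff x.2 (Sser (P ^ 2)) = 0 := by
      intro x hx
      rw [Finset.HasAntidiagonal.mem_antidiagonal] at hx
      by_cases hc : MvPowerSeries.coeff x.1 ((P : MS)) = 0
      · rw [hc, zero_mul]
      · have h1 : deg x.1 = 1 := hS x.1 hc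
        have hdd := deg_add x.1 x.2
        rw [hx] at hdd
        have hz2 : MvPowerSeries.coeff x.2 (Sser (P ^ 2)) = 0 := by
          rw [coeff_Sser]
          apply Finset.sum_eq_zero
          intro j _
          rw [← pow_mul, (hP.pow (2 * j)).vanish (by omega), mul_zero]
        rw [hz2, mul_zero]
    rw [Finset.sum_eq_zero hz, mul_zero]
    have : (1 - (-1 : ℂ)^n) = 0 := by
      rw [Even.neg_one_pow he]; ring
    rw [this, zero_mul, zero_div]
  · -- odd case
    obtain ⟨m, hmn⟩ := ho
    have hterm : ∀ x ∈ Finset.HasAntidiagonal.antidiagonal d,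
        MvPowerSeries.coeff x.1 ((P : MS)) * MvPowerSeries.coeff x.2 (Sser (P ^ 2))
          = MvPolynomial.coeff x.1 P * MvPolynomial.coeff x.2 (P ^ (n - 1))
              * (1 / ((n.factorial : ℂ))) := by
      intro x hx
      rw [Finset.HasAntidiagonal.mem_antidiagonal] at hx
      by_cases hc : MvPowerSeries.coeff x.1 ((P : MS)) = 0
      · rw [hc, zero_mul, show MvPolynomial.coeff x.1 P = (0 : ℂ) from by
          rwa [MvPolynomial.coeff_coe] at hc, zero_mul, zero_mul]
      · have h1 : deg x.1 = 1 := hS x.1 hc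
        have hdd := deg_add x.1 x.2
        rw [hx] at hdd
        have h2 : deg x.2 = 2 * m := by omega
        rw [coeff_Sser, Finset.sum_eq_single_of_mem m
          (by rw [Finset.mem_range, Nat.lt_succ_iff, h2]; omega)
          (fun j _ hj => by
            rw [← pow_mul, (hP.pow (2 * j)).vanish (by omega), mul_zero])]
        rw [← pow_mul, MvPolynomial.coeff_coe, show 2 * m + 1 = n from by omega,
          show 2 * m = n - 1 from by omega]
        ring
    have hodd : Odd n := ⟨m, by omega⟩
    rw [Finset.sum_congr rfl hterm, show ((-1 : ℂ))^n = -1 from hodd.neg_one_pow]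
    rw [← Finset.sum_mul, ← MvPolynomial.coeff_mul,
      show P * P ^ (n - 1) = P ^ n from by
        rw [← pow_succ']; congr 1; omega,
      ← MvPolynomial.coe_pow, MvPolynomial.coeff_coe]
    ring

end FSAux
namespace FSAux

def rA : MP := MvPolynomial.X 0 ^ 2 + MvPolynomial.X 0 * MvPolynomial.X 1 + MvPolynomial.X 1 ^ 2
def rB : MP := (MvPolynomial.X 0 + MvPolynomial.X 1) ^ 2
def Aser : MS := Sser rA
def Bser : MS := Sser rB

lemma PH2_rA : PH 2 rA := by
  have h0 := PH.X (0 : Fin 2)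
  have h1 := PH.X (1 : Fin 2)
  exact ((by simpa using h0.pow 2 : PH 2 (MvPolynomial.X 0 ^ 2)).add
    (by simpa using h0.mul h1)).add (by simpa using h1.pow 2)

lemma PH2_rB : PH 2 rB := by
  simpa [rB] using ((PH.X (0 : Fin 2)).add (PH.X 1)).pow 2

lemma deg_zero : deg (0 : Fin 2 →₀ ℕ) = 0 := by simp [deg]

lemma constC_Sser (r : MP) : MvPowerSeries.constantCoeff (Sser r) = 1 := by
  rw [← MvPowerSeries.coeff_zero_eq_constantCoeff_apply, MvPowerSeries.coeff_apply, Sser, deg_zero]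
  simp

lemma Aser_ne : Aser ≠ 0 := fun h => by
  have := constC_Sser rA
  rw [show Sser rA = Aser from rfl, h, map_zero] at this
  exact zero_ne_one this

lemma constA_ne : MvPowerSeries.constantCoeff Aser ≠ 0 := by
  rw [show Aser = Sser rA from rfl, constC_Sser]; exact one_ne_zero

lemma ev0_coeff (h : MS) (t : ℕ) :
    MvPowerSeries.coeff (Finsupp.single 0 t) (sub2 (MvPolynomial.X 0) 0 h)
      = MvPowerSeries.coeff (Finsupp.single 0 t) h := by
  have hdeg : deg (Finsupp.single (0 : Fin 2) t) = t := by
    simp [deg, Finsupp.single_apply]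
  rw [sub2_eq_sum _ _ (PH.X 0) (PH.zero 1) h _ le_rfl]
  rw [Finset.sum_eq_single_of_mem (t, 0)
    (by simp only [Finset.mem_product, Finset.mem_range, hdeg]; omega)]
  · rw [pow_zero, mul_one, MvPolynomial.coeff_X_pow, if_pos (by simp [mm]), mul_one,
      show mm t 0 = Finsupp.single (0 : Fin 2) t from by simp [mm]]
  · intro b _ hne
    rcases Nat.eq_zero_or_pos b.2 with h2 | h2
    · have hb1 : b.1 ≠ t := fun he => hne (by rw [← he, ← h2])
      rw [h2, pow_zero, mul_one, MvPolynomial.coeff_X_pow, if_neg, mul_zero]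
      intro hc
      exact hb1 (by
        have := congrArg (fun f : Fin 2 →₀ ℕ => f 0) hc
        simpa [Finsupp.single_apply] using this)
    · rw [zero_pow (by omega), mul_zero, MvPolynomial.coeff_zero, mul_zero]

lemma ev1_coeff (h : MS) (t : ℕ) :
    MvPowerSeries.coeff (Finsupp.single 1 t) (sub2 0 (MvPolynomial.X 1) h)
      = MvPowerSeries.coeff (Finsupp.single 1 t) h := by
  have hdeg : deg (Finsupp.single (1 : Fin 2) t) = t := by
    simp [deg, Finsupp.single_apply]
  rw [sub2_eq_sum _ _ (PH.zero 1) (PH.X 1) h _ le_rfl]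
  rw [Finset.sum_eq_single_of_mem (0, t)
    (by simp only [Finset.mem_product, Finset.mem_range, hdeg]; omega)]
  · rw [pow_zero, one_mul, MvPolynomial.coeff_X_pow, if_pos (by simp [mm]), mul_one,
      show mm 0 t = Finsupp.single (1 : Fin 2) t from by simp [mm]]
  · intro b _ hne
    rcases Nat.eq_zero_or_pos b.1 with h2 | h2
    · have hb1 : b.2 ≠ t := fun he => hne (by rw [← h2, ← he])
      rw [h2, pow_zero, one_mul, MvPolynomial.coeff_X_pow, if_neg, mul_zero]
      intro hc
      exact hb1 (by
        have := congrArg (fun f : Fin 2 →₀ ℕ => f 1) hc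
        simpa [Finsupp.single_apply] using this)
    · rw [zero_pow (by omega), zero_mul, MvPolynomial.coeff_zero, mul_zero]

/-- the series `(B - A) * A⁻¹`, to be divided by `λμ`. -/
def hser : MS := (Bser - Aser) * Aser⁻¹

lemma ev0_rA : Tm (MvPolynomial.X 0) 0 rA = MvPolynomial.X 0 ^ 2 := by
  rw [rA, map_add, map_add, map_mul, map_pow, map_pow, Tm_X0, Tm_X1]
  ring

lemma ev0_rB : Tm (MvPolynomial.X 0) 0 rB = MvPolynomial.X 0 ^ 2 := by
  rw [rB, map_pow, map_add, Tm_X0, Tm_X1]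
  ring

lemma ev1_rA : Tm 0 (MvPolynomial.X 1) rA = MvPolynomial.X 1 ^ 2 := by
  rw [rA, map_add, map_add, map_mul, map_pow, map_pow, Tm_X0, Tm_X1]
  ring

lemma ev1_rB : Tm 0 (MvPolynomial.X 1) rB = MvPolynomial.X 1 ^ 2 := by
  rw [rB, map_pow, map_add, Tm_X0, Tm_X1]
  ring

lemma hser_vanish (d : Fin 2 →₀ ℕ) (hd : d 0 = 0 ∨ d 1 = 0) :
    MvPowerSeries.coeff d hser = 0 := by
  rcases hd with hd | hd
  · -- use ev1
    have hzero : sub2 0 (MvPolynomial.X 1) hser = 0 := by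
      have : sub2 0 (MvPolynomial.X 1) hser
          = subRH 0 (MvPolynomial.X 1) (PH.zero 1) (PH.X 1) hser := rfl
      rw [this, hser, map_mul, map_sub]
      rw [show (subRH 0 (MvPolynomial.X 1) (PH.zero 1) (PH.X 1)) Bser
          = sub2 0 (MvPolynomial.X 1) (Sser rB) from rfl,
        show (subRH 0 (MvPolynomial.X 1) (PH.zero 1) (PH.X 1)) Aser
          = sub2 0 (MvPolynomial.X 1) (Sser rA) from rfl,
        sub2_Sser (PH.zero 1) (PH.X 1), sub2_Sser (PH.zero 1) (PH.X 1), ev1_rA, ev1_rB,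
        sub_self, zero_mul]
    have hrepr : d = Finsupp.single (1 : Fin 2) (d 1) := by
      rw [mm_repr d, hd]
      simp [mm]
    rw [hrepr, ← ev1_coeff hser (d 1), hzero, map_zero]
  · have hzero : sub2 (MvPolynomial.X 0) 0 hser = 0 := by
      have : sub2 (MvPolynomial.X 0) 0 hser
          = subRH (MvPolynomial.X 0) 0 (PH.X 0) (PH.zero 1) hser := rfl
      rw [this, hser, map_mul, map_sub]
      rw [show (subRH (MvPolynomial.X 0) 0 (PH.X 0) (PH.zero 1)) Bser
          = sub2 (MvPolynomial.X 0) 0 (Sser rB) from rfl,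
        show (subRH (MvPolynomial.X 0) 0 (PH.X 0) (PH.zero 1)) Aser
          = sub2 (MvPolynomial.X 0) 0 (Sser rA) from rfl,
        sub2_Sser (PH.X 0) (PH.zero 1), sub2_Sser (PH.X 0) (PH.zero 1), ev0_rA, ev0_rB,
        sub_self, zero_mul]
    have hrepr : d = Finsupp.single (0 : Fin 2) (d 0) := by
      rw [mm_repr d, hd]
      simp [mm]
    rw [hrepr, ← ev0_coeff hser (d 0), hzero, map_zero]

def f₀ : MS := fun e => hser (e + mm 1 1)

lemma XX_eq : (MvPowerSeries.X 0 : MS) * MvPowerSeries.X 1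
    = MvPowerSeries.monomial (mm 1 1) 1 := by
  rw [MvPowerSeries.X, MvPowerSeries.X, MvPowerSeries.monomial_mul_monomial, one_mul]
  rfl

lemma X0X1f₀ : (MvPowerSeries.X 0 : MS) * MvPowerSeries.X 1 * f₀ = hser := by
  apply MvPowerSeries.ext
  intro d
  rw [XX_eq, MvPowerSeries.coeff_monomial_mul]
  by_cases hle : mm 1 1 ≤ d
  · rw [if_pos hle, one_mul]
    show f₀ (d - mm 1 1) = _
    rw [f₀, show d - mm 1 1 + mm 1 1 = d from tsub_add_cancel_of_le hle]
    rfl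
  · rw [if_neg hle]
    refine (hser_vanish d ?_).symm
    by_contra hc
    push_neg at hc
    apply hle
    rw [Finsupp.le_def]
    intro i
    fin_cases i
    · show mm 1 1 0 ≤ d 0
      rw [mm_apply0]; omega
    · show mm 1 1 1 ≤ d 1
      rw [mm_apply1]; omega

lemma hf₀ : (1 + MvPowerSeries.X 0 * MvPowerSeries.X 1 * f₀) * Aser = Bser := by
  rw [X0X1f₀, add_mul, one_mul, hser, mul_assoc, MvPowerSeries.inv_mul_cancel Aser constA_ne,
    mul_one]
  ring

lemma XX_ne : (MvPowerSeries.X 0 : MS) * MvPowerSeries.X 1 ≠ 0 := by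
  intro h
  have := congrArg (MvPowerSeries.coeff (mm 1 1)) h
  rw [XX_eq, MvPowerSeries.coeff_monomial_same, map_zero] at this
  exact one_ne_zero this

lemma uniq (g g' : MS) (hg : (1 + MvPowerSeries.X 0 * MvPowerSeries.X 1 * g) * Aser = Bser)
    (hg' : (1 + MvPowerSeries.X 0 * MvPowerSeries.X 1 * g') * Aser = Bser) : g = g' := by
  have h1 : (1 + MvPowerSeries.X 0 * MvPowerSeries.X 1 * g)
      = (1 + MvPowerSeries.X 0 * MvPowerSeries.X 1 * g') :=
    mul_right_cancel₀ Aser_ne (hg.trans hg'.symm)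
  have h2 : MvPowerSeries.X 0 * MvPowerSeries.X 1 * g
      = MvPowerSeries.X 0 * MvPowerSeries.X 1 * g' := by
    have := congrArg (fun t => t - (1 : MS)) h1
    simpa using this
  exact mul_left_cancel₀ XX_ne h2

end FSAux
namespace FSAux

lemma coeMS_X0 : ((MvPolynomial.X 0 : MP) : MS) = MvPowerSeries.X 0 := MvPolynomial.coe_X 0
lemma coeMS_X1 : ((MvPolynomial.X 1 : MP) : MS) = MvPowerSeries.X 1 := MvPolynomial.coe_X 1

lemma coe_neg_MS (P : MP) : ((-P : MP) : MS) = -(P : MS) := by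
  rw [← MvPolynomial.coeToMvPowerSeries.ringHom_apply, map_neg,
    MvPolynomial.coeToMvPowerSeries.ringHom_apply]

lemma coe_sub_MS (P Q : MP) : ((P - Q : MP) : MS) = (P : MS) - (Q : MS) := by
  rw [← MvPolynomial.coeToMvPowerSeries.ringHom_apply, map_sub,
    MvPolynomial.coeToMvPowerSeries.ringHom_apply, MvPolynomial.coeToMvPowerSeries.ringHom_apply]

lemma subRH_X0 {p q : MP} (hp : PH 1 p) (hq : PH 1 q) :
    sub2 p q (MvPowerSeries.X 0) = (p : MS) := by
  rw [← coeMS_X0, sub2_coe hp hq, Tm_X0]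

lemma subRH_X1 {p q : MP} (hp : PH 1 p) (hq : PH 1 q) :
    sub2 p q (MvPowerSeries.X 1) = (q : MS) := by
  rw [← coeMS_X1, sub2_coe hp hq, Tm_X1]

lemma mapped_eq {p q : MP} (hp : PH 1 p) (hq : PH 1 q) {f : MS}
    (hf : (1 + MvPowerSeries.X 0 * MvPowerSeries.X 1 * f) * Aser = Bser) :
    (1 + (p : MS) * (q : MS) * sub2 p q f) * Sser (Tm p q rA) = Sser (Tm p q rB) := by
  have h := congrArg (subRH p q hp hq) hf
  rw [map_mul, map_add, map_one, map_mul, map_mul] at h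
  rw [show (subRH p q hp hq) (MvPowerSeries.X 0) = (p : MS) from subRH_X0 hp hq,
    show (subRH p q hp hq) (MvPowerSeries.X 1) = (q : MS) from subRH_X1 hp hq,
    show (subRH p q hp hq) Aser = Sser (Tm p q rA) from sub2_Sser hp hq rA,
    show (subRH p q hp hq) Bser = Sser (Tm p q rB) from sub2_Sser hp hq rB] at h
  exact h

lemma two_ne_MS : (2 : MS) ≠ 0 := by
  intro h
  have := congrArg (MvPowerSeries.constantCoeff) h
  rw [map_ofNat, map_zero] at this
  norm_num at this

-- homogeneity facts for linear forms
lemma PH_negX0 : PH 1 (-MvPolynomial.X 0 : MP) := (PH.X 0).neg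
lemma PH_negX1 : PH 1 (-MvPolynomial.X 1 : MP) := (PH.X 1).neg
lemma PH_q : PH 1 (-MvPolynomial.X 0 - MvPolynomial.X 1 : MP) := (PH.X 0).neg.sub (PH.X 1)

/-- swap invariance -/
lemma swap_inv {f : MS} (hf : (1 + MvPowerSeries.X 0 * MvPowerSeries.X 1 * f) * Aser = Bser) :
    sub2 (MvPolynomial.X 1) (MvPolynomial.X 0) f = f := by
  have h := mapped_eq (PH.X 1) (PH.X 0) hf
  rw [show Tm (MvPolynomial.X 1) (MvPolynomial.X 0) rA = rA from by
      rw [rA, map_add, map_add, map_mul, map_pow, map_pow, Tm_X0, Tm_X1]; ring,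
    show Tm (MvPolynomial.X 1) (MvPolynomial.X 0) rB = rB from by
      rw [rB, map_pow, map_add, Tm_X0, Tm_X1]; ring,
    coeMS_X0, coeMS_X1] at h
  have h' : (1 + MvPowerSeries.X 1 * MvPowerSeries.X 0
      * sub2 (MvPolynomial.X 1) (MvPolynomial.X 0) f) * Aser = Bser := h
  exact uniq _ _ (by linear_combination h') hf

/-- negation invariance -/
lemma neg_inv {f : MS} (hf : (1 + MvPowerSeries.X 0 * MvPowerSeries.X 1 * f) * Aser = Bser) :
    sub2 (-MvPolynomial.X 0) (-MvPolynomial.X 1) f = f := by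
  have h := mapped_eq PH_negX0 PH_negX1 hf
  rw [show Tm (-MvPolynomial.X 0) (-MvPolynomial.X 1) rA = rA from by
      rw [rA, map_add, map_add, map_mul, map_pow, map_pow, Tm_X0, Tm_X1]; ring,
    show Tm (-MvPolynomial.X 0) (-MvPolynomial.X 1) rB = rB from by
      rw [rB, map_pow, map_add, Tm_X0, Tm_X1]; ring,
    coe_neg_MS, coe_neg_MS, coeMS_X0, coeMS_X1] at h
  have h' : (1 + -MvPowerSeries.X 0 * -MvPowerSeries.X 1
      * sub2 (-MvPolynomial.X 0) (-MvPolynomial.X 1) f) * Aser = Bser := h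
  exact uniq _ _ (by linear_combination h') hf

/-- the two substituted equations -/
lemma eq_s1 {f : MS} (hf : (1 + MvPowerSeries.X 0 * MvPowerSeries.X 1 * f) * Aser = Bser) :
    (1 + MvPowerSeries.X 1 * (-MvPowerSeries.X 0 - MvPowerSeries.X 1)
        * sub2 (MvPolynomial.X 1) (-MvPolynomial.X 0 - MvPolynomial.X 1) f) * Aser
      = Sser (MvPolynomial.X 0 ^ 2) := by
  have h := mapped_eq (PH.X 1) PH_q hf
  rw [show Tm (MvPolynomial.X 1) (-MvPolynomial.X 0 - MvPolynomial.X 1) rA = rA from by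
      rw [rA, map_add, map_add, map_mul, map_pow, map_pow, Tm_X0, Tm_X1]; ring,
    show Tm (MvPolynomial.X 1) (-MvPolynomial.X 0 - MvPolynomial.X 1) rB
        = MvPolynomial.X 0 ^ 2 from by
      rw [rB, map_pow, map_add, Tm_X0, Tm_X1]; ring,
    coe_sub_MS, coe_neg_MS, coeMS_X0, coeMS_X1] at h
  exact h

lemma eq_s2 {f : MS} (hf : (1 + MvPowerSeries.X 0 * MvPowerSeries.X 1 * f) * Aser = Bser) :
    (1 + MvPowerSeries.X 0 * (-MvPowerSeries.X 0 - MvPowerSeries.X 1)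
        * sub2 (MvPolynomial.X 0) (-MvPolynomial.X 0 - MvPolynomial.X 1) f) * Aser
      = Sser (MvPolynomial.X 1 ^ 2) := by
  have h := mapped_eq (PH.X 0) PH_q hf
  rw [show Tm (MvPolynomial.X 0) (-MvPolynomial.X 0 - MvPolynomial.X 1) rA = rA from by
      rw [rA, map_add, map_add, map_mul, map_pow, map_pow, Tm_X0, Tm_X1]; ring,
    show Tm (MvPolynomial.X 0) (-MvPolynomial.X 0 - MvPolynomial.X 1) rB
        = MvPolynomial.X 1 ^ 2 from by
      rw [rB, map_pow, map_add, Tm_X0, Tm_X1]; ring,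
    coe_sub_MS, coe_neg_MS, coeMS_X0, coeMS_X1] at h
  exact h

/-- the sinh identity (eq4). -/
lemma eq4 : (MvPowerSeries.X 0 + MvPowerSeries.X 1) * Bser
    = expMv (MvPowerSeries.X 1) * (MvPowerSeries.X 0 * Sser (MvPolynomial.X 0 ^ 2))
      + expMv (-MvPowerSeries.X 0) * (MvPowerSeries.X 1 * Sser (MvPolynomial.X 1 ^ 2)) := by
  have h0 := sinhLem (MvPolynomial.X 0) (PH.X 0)
  have h1 := sinhLem (MvPolynomial.X 1) (PH.X 1)
  have hS := sinhLem (MvPolynomial.X 0 + MvPolynomial.X 1) ((PH.X 0).add (PH.X 1))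
  rw [coeMS_X0] at h0
  rw [coeMS_X1] at h1
  rw [show ((MvPolynomial.X 0 + MvPolynomial.X 1 : MP) : MS)
      = MvPowerSeries.X 0 + MvPowerSeries.X 1 from by
    rw [← MvPolynomial.coeToMvPowerSeries.ringHom_apply, map_add,
      MvPolynomial.coeToMvPowerSeries.ringHom_apply, MvPolynomial.coeToMvPowerSeries.ringHom_apply,
      coeMS_X0, coeMS_X1], show Sser ((MvPolynomial.X 0 + MvPolynomial.X 1) ^ 2) = Bser
      from rfl] at hS
  have m1 : expMv (MvPowerSeries.X 1) * expMv (MvPowerSeries.X 0)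
      = expMv (MvPowerSeries.X 0 + MvPowerSeries.X 1) := by
    rw [expAdd (SH.X 1) (SH.X 0), add_comm]
  have m2 : expMv (-MvPowerSeries.X 0) * expMv (-MvPowerSeries.X 1)
      = expMv (-(MvPowerSeries.X 0 + MvPowerSeries.X 1)) := by
    rw [expAdd (SH.X 0).neg (SH.X 1).neg, neg_add]
  apply mul_left_cancel₀ two_ne_MS
  show (2 : MS) * _ = (2 : MS) * _
  linear_combination hS - m1 + m2 - expMv (MvPowerSeries.X 1) * h0
    - expMv (-MvPowerSeries.X 0) * h1

/-- equation (1.5b) body. -/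
lemma eq15b_main {f : MS} (hf : (1 + MvPowerSeries.X 0 * MvPowerSeries.X 1 * f) * Aser = Bser) :
    MvPowerSeries.X 0 * MvPowerSeries.X 1 * (MvPowerSeries.X 0 + MvPowerSeries.X 1) *
        (f + expMv (MvPowerSeries.X 1) * sub2 (MvPolynomial.X 1) (-MvPolynomial.X 0 - MvPolynomial.X 1) f
          + expMv (-MvPowerSeries.X 0) * sub2 (MvPolynomial.X 0) (-MvPolynomial.X 0 - MvPolynomial.X 1) f)
      = MvPowerSeries.X 0 * (expMv (MvPowerSeries.X 1) - 1)
        + MvPowerSeries.X 1 * (expMv (-MvPowerSeries.X 0) - 1) := by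
  have h2 := eq_s1 hf
  have h3 := eq_s2 hf
  have h4 := eq4
  apply mul_right_cancel₀ Aser_ne
  linear_combination (MvPowerSeries.X 0 + MvPowerSeries.X 1) * hf
    - MvPowerSeries.X 0 * expMv (MvPowerSeries.X 1) * h2
    - MvPowerSeries.X 1 * expMv (-MvPowerSeries.X 0) * h3 + h4

end FSAux

/-- Corollary 1.6a: there is a unique `f^I` with
`(1 + λμ·f^I)·S(λ²+λμ+μ²) = S((λ+μ)²)`; it is symmetric, even, and satisfies (1.5b). -/
theorem first_series_assoc :
    (∃! f : MvPowerSeries (Fin 2) ℂ,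
      (1 + X 0 * X 1 * f) *
          Sser (MvPolynomial.X 0 ^ 2 + MvPolynomial.X 0 * MvPolynomial.X 1
            + MvPolynomial.X 1 ^ 2)
        = Sser ((MvPolynomial.X 0 + MvPolynomial.X 1) ^ 2)) ∧
    (∀ f : MvPowerSeries (Fin 2) ℂ,
      (1 + X 0 * X 1 * f) *
          Sser (MvPolynomial.X 0 ^ 2 + MvPolynomial.X 0 * MvPolynomial.X 1
            + MvPolynomial.X 1 ^ 2)
        = Sser ((MvPolynomial.X 0 + MvPolynomial.X 1) ^ 2) →
      swapS f = f ∧ negS f = f ∧ Eq15b f) := by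
  constructor
  · refine ⟨FSAux.f₀, FSAux.hf₀, ?_⟩
    intro g hg
    exact FSAux.uniq g FSAux.f₀ hg FSAux.hf₀
  · intro f hf
    have hf' : (1 + MvPowerSeries.X 0 * MvPowerSeries.X 1 * f) * FSAux.Aser = FSAux.Bser := hf
    refine ⟨FSAux.swap_inv hf', FSAux.neg_inv hf', ?_⟩
    exact FSAux.eq15b_main hf'

end
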